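/- Let X be a nontrivial Banach space over ℝ or ℂ, let k ≥ 1, and let P : X → 𝕂 be a bounded k-homogeneous polynomial that strongly attains its norm at a point y ∈ S_X. Then the (k+1)-homogeneous polynomial Q(x) = y*(x)·P(x), where y* ∈ X* satisfies ‖y*‖ = y*(y) = 1, strongly attains its norm at y. -/

import Mathlib

open Metric Filter Topology Set

/-- The sup norm of a function over the closed unit ball. -/
noncomputable def supNorm {X Y : Type*} [NormedAddCommGroup X] [NormedAddCommGroup Y]
    (f : X → Y) : ℝ :=
  sSup ((fun x => ‖f x‖) '' Metric.closedBall (0 : X) 1)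

/-- `f` strongly attains its (sup) norm at `x₀`: every maximizing sequence in the closed unit
ball has a subsequence converging to a unimodular multiple of `x₀`. -/
def StronglyAttains (𝕂 : Type*) [RCLike 𝕂] {X Y : Type*} [NormedAddCommGroup X]
    [NormedSpace 𝕂 X] [NormedAddCommGroup Y] (f : X → Y) (x₀ : X) : Prop :=
  ∀ xs : ℕ → X, (∀ n, xs n ∈ Metric.closedBall (0 : X) 1) →
    Tendsto (fun n => ‖f (xs n)‖) atTop (nhds (supNorm f)) →
    ∃ (α : 𝕂) (φ : ℕ → ℕ), StrictMono φ ∧ ‖α‖ = 1 ∧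
      Tendsto (fun n => xs (φ n)) atTop (nhds (α • x₀))

/-- The `k`-homogeneous polynomial associated to a continuous `k`-multilinear map. -/
noncomputable def polyEval {𝕂 : Type*} [RCLike 𝕂] {X Y : Type*} [NormedAddCommGroup X]
    [NormedSpace 𝕂 X] [NormedAddCommGroup Y] [NormedSpace 𝕂 Y] {k : ℕ}
    (L : ContinuousMultilinearMap 𝕂 (fun _ : Fin k => X) Y) : X → Y :=
  fun x => L (fun _ => x)

/-- The set `ρ̃𝒫(ᵏX)` of points of the closed unit ball at which some nonzero bounded
`k`-homogeneous scalar polynomial strongly attains its norm. -/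
def polyAttainPts (𝕂 : Type*) [RCLike 𝕂] (X : Type*) [NormedAddCommGroup X]
    [NormedSpace 𝕂 X] (k : ℕ) : Set X :=
  {x₀ | x₀ ∈ Metric.closedBall (0 : X) 1 ∧
    ∃ L : ContinuousMultilinearMap 𝕂 (fun _ : Fin k => X) 𝕂,
      polyEval L ≠ 0 ∧ StronglyAttains 𝕂 (polyEval L) x₀}

/-- Numerical radius `v(f) = sup { |x*(f x)| : (x, x*) ∈ Π(X) }`. -/
noncomputable def numRadius (𝕂 : Type*) [RCLike 𝕂] {X : Type*} [NormedAddCommGroup X]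
    [NormedSpace 𝕂 X] (f : X → X) : ℝ :=
  sSup {r | ∃ (x : X) (x' : X →L[𝕂] 𝕂), ‖x‖ = 1 ∧ ‖x'‖ = 1 ∧ x' x = 1 ∧ r = ‖x' (f x)‖}

/-- The `k`-polynomial numerical index `n^(k)(X)`. -/
noncomputable def polyNumIndex (𝕂 : Type*) [RCLike 𝕂] (X : Type*) [NormedAddCommGroup X]
    [NormedSpace 𝕂 X] (k : ℕ) : ℝ :=
  sInf {r | ∃ L : ContinuousMultilinearMap 𝕂 (fun _ : Fin k => X) X,
    supNorm (polyEval L) = 1 ∧ r = numRadius 𝕂 (polyEval L)}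

/-- The numerical index `n(X)` of a Banach space. -/
noncomputable def numIndex (𝕂 : Type*) [RCLike 𝕂] (X : Type*) [NormedAddCommGroup X]
    [NormedSpace 𝕂 X] : ℝ :=
  sInf {r | ∃ T : X →L[𝕂] X, ‖T‖ = 1 ∧ r = numRadius 𝕂 (⇑T)}

/-- `x` is an extreme point of the convex set `s` : `y + z = 2x` with `y, z ∈ s` forces
`y = z = x`. -/
def IsExtremePt {E : Type*} [AddCommGroup E] (s : Set E) (x : E) : Prop :=
  x ∈ s ∧ ∀ y ∈ s, ∀ z ∈ s, y + z = x + x → y = x ∧ z = x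

/-- `x` is a strongly exposed point of the closed unit ball. -/
def StronglyExposedPt (𝕂 : Type*) [RCLike 𝕂] {X : Type*} [NormedAddCommGroup X]
    [NormedSpace 𝕂 X] (x : X) : Prop :=
  x ∈ Metric.closedBall (0 : X) 1 ∧ ∃ x' : X →L[𝕂] 𝕂, x' ≠ 0 ∧ ‖x'‖ ≤ 1 ∧
    (∀ y ∈ Metric.closedBall (0 : X) 1, RCLike.re (x' y) ≤ RCLike.re (x' x)) ∧
    ∀ xs : ℕ → X, (∀ n, xs n ∈ Metric.closedBall (0 : X) 1) →
      Tendsto (fun n => RCLike.re (x' (xs n))) atTop (nhds (RCLike.re (x' x))) →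
      Tendsto xs atTop (nhds x)

/-- `x'` is a weak-* exposed point of the dual unit ball. -/
def WeakStarExposed (𝕂 : Type*) [RCLike 𝕂] {X : Type*} [NormedAddCommGroup X]
    [NormedSpace 𝕂 X] (x' : X →L[𝕂] 𝕂) : Prop :=
  ‖x'‖ ≤ 1 ∧ ∃ x ∈ Metric.closedBall (0 : X) 1, x' x = 1 ∧
    ∀ y' : X →L[𝕂] 𝕂, ‖y'‖ ≤ 1 → y' x = 1 → y' = x'

/-- `f` is a strong peak function at `x₀`: `f` is nonzero on the ball and every maximizing
sequence in the closed unit ball converges to `x₀`. -/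
def StrongPeakAt {X Y : Type*} [NormedAddCommGroup X] [NormedAddCommGroup Y]
    (f : X → Y) (x₀ : X) : Prop :=
  (∃ x ∈ Metric.closedBall (0 : X) 1, f x ≠ 0) ∧
    ∀ xs : ℕ → X, (∀ n, xs n ∈ Metric.closedBall (0 : X) 1) →
      Tendsto (fun n => ‖f (xs n)‖) atTop (nhds (supNorm f)) →
      Tendsto xs atTop (nhds x₀)

/-- Complex extreme point of the closed unit ball. -/
def ComplexExtremePoint {X : Type*} [NormedAddCommGroup X] [NormedSpace ℂ X] (x : X) : Prop :=
  x ∈ Metric.closedBall (0 : X) 1 ∧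
    ∀ y : X, (∀ θ : ℝ, ‖x + Complex.exp (θ * Complex.I) • y‖ ≤ 1) → y = 0

/-- Membership in `A_b(B_X : Y)`: bounded, continuous on the closed unit ball and
holomorphic on the open unit ball. -/
def MemAb {X Y : Type*} [NormedAddCommGroup X] [NormedSpace ℂ X] [NormedAddCommGroup Y]
    [NormedSpace ℂ Y] (f : X → Y) : Prop :=
  ContinuousOn f (Metric.closedBall (0 : X) 1) ∧
    (∃ C, ∀ x ∈ Metric.closedBall (0 : X) 1, ‖f x‖ ≤ C) ∧
    DifferentiableOn ℂ f (Metric.ball (0 : X) 1)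

/-- Membership in `A_u(B_X : Y)`: additionally uniformly continuous on the closed ball. -/
def MemAu {X Y : Type*} [NormedAddCommGroup X] [NormedSpace ℂ X] [NormedAddCommGroup Y]
    [NormedSpace ℂ Y] (f : X → Y) : Prop :=
  MemAb f ∧ UniformContinuousOn f (Metric.closedBall (0 : X) 1)

/-- The set `ρA_u(B_X)` of strong peak points of `A_u(B_X)`. -/
def strongPeakPtsAu (X : Type*) [NormedAddCommGroup X] [NormedSpace ℂ X] : Set X :=
  {x₀ | ∃ f : X → ℂ, MemAu f ∧ StrongPeakAt f x₀}

/-- The holomorphic numerical index `n_u(X)`. -/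
noncomputable def holNumIndex (X : Type*) [NormedAddCommGroup X] [NormedSpace ℂ X] : ℝ :=
  sInf {r | ∃ f : X → X, MemAu f ∧ supNorm f = 1 ∧ r = numRadius ℂ f}
/-- If a nonzero bounded `k`-homogeneous scalar polynomial `P` strongly attains
its norm at `y ∈ S_X` and `y*` is a norming functional of `y`, then the `(k+1)`-homogeneous
polynomial `Q(x) = y*(x) · P(x)` strongly attains its norm at `y`. -/
theorem statement0 {𝕂 X : Type*} [RCLike 𝕂] [NormedAddCommGroup X] [NormedSpace 𝕂 X]
    [CompleteSpace X] [Nontrivial X] {k : ℕ} (hk : 1 ≤ k)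
    (L : ContinuousMultilinearMap 𝕂 (fun _ : Fin k => X) 𝕂)
    (hL : polyEval L ≠ 0) (y : X) (hy : ‖y‖ = 1)
    (hatt : StronglyAttains 𝕂 (polyEval L) y)
    (y' : X →L[𝕂] 𝕂) (hy'n : ‖y'‖ = 1) (hy'y : y' y = 1) :
    StronglyAttains 𝕂 (fun x => y' x * L (fun _ => x)) y ∧
      ∃ M : ContinuousMultilinearMap 𝕂 (fun _ : Fin (k + 1) => X) 𝕂,
        polyEval M = fun x => y' x * L (fun _ => x) := by
  classical
  have hmem : ∀ x : X, x ∈ Metric.closedBall (0:X) 1 ↔ ‖x‖ ≤ 1 := by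
    intro x; simp [Metric.mem_closedBall, dist_zero_right]
  have hymem : y ∈ Metric.closedBall (0:X) 1 := (hmem y).2 (le_of_eq hy)
  -- bound for P on the ball
  have hPle1 : ∀ x ∈ Metric.closedBall (0:X) 1, ‖polyEval L x‖ ≤ ‖L‖ := by
    intro x hx
    calc ‖polyEval L x‖ ≤ ‖L‖ * ∏ _i : Fin k, ‖x‖ := L.le_opNorm _
      _ ≤ ‖L‖ * 1 := by
          refine mul_le_mul_of_nonneg_left ?_ (norm_nonneg L)
          exact Finset.prod_le_one (fun i _ => norm_nonneg x) (fun i _ => (hmem x).1 hx)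
      _ = ‖L‖ := mul_one _
  have hPbdd : BddAbove ((fun x => ‖polyEval L x‖) '' Metric.closedBall (0:X) 1) := by
    refine ⟨‖L‖, ?_⟩
    rintro r ⟨x, hx, rfl⟩
    exact hPle1 x hx
  have hPne : ((fun x => ‖polyEval L x‖) '' Metric.closedBall (0:X) 1).Nonempty :=
    ⟨_, Set.mem_image_of_mem _ (Metric.mem_closedBall_self zero_le_one)⟩
  have hPle : ∀ x ∈ Metric.closedBall (0:X) 1, ‖polyEval L x‖ ≤ supNorm (polyEval L) := by
    intro x hx
    exact le_csSup hPbdd (Set.mem_image_of_mem _ hx)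
  have hcont : Continuous (polyEval L) :=
    L.coe_continuous.comp (continuous_pi fun _ => continuous_id)
  -- P attains its norm at y
  have hPy : ‖polyEval L y‖ = supNorm (polyEval L) := by
    obtain ⟨u, _hu, hut, humem⟩ := exists_seq_tendsto_sSup hPne hPbdd
    have hxs : ∀ n, ∃ x, x ∈ Metric.closedBall (0:X) 1 ∧ ‖polyEval L x‖ = u n := by
      intro n
      obtain ⟨x, hx, hxe⟩ := humem n
      exact ⟨x, hx, hxe⟩
    choose xs hxsb hxse using hxs
    have hxt : Tendsto (fun n => ‖polyEval L (xs n)‖) atTop (nhds (supNorm (polyEval L))) := by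
      simpa [hxse, supNorm] using hut
    obtain ⟨α, φ, hφ, hα, hconv⟩ := hatt xs hxsb hxt
    have h1 : Tendsto (fun n => ‖polyEval L (xs (φ n))‖) atTop
        (nhds ‖polyEval L (α • y)‖) :=
      ((hcont.norm.tendsto _).comp hconv)
    have h2 : Tendsto (fun n => ‖polyEval L (xs (φ n))‖) atTop
        (nhds (supNorm (polyEval L))) :=
      hxt.comp hφ.tendsto_atTop
    have heq : ‖polyEval L (α • y)‖ = supNorm (polyEval L) :=
      tendsto_nhds_unique h1 h2
    have hsm : polyEval L (α • y) = (α ^ k) • polyEval L y := by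
      have := L.map_smul_univ (fun _ : Fin k => α) (fun _ => y)
      simpa [polyEval, Finset.prod_const] using this
    rw [← heq, hsm, norm_smul, norm_pow, hα, one_pow, one_mul]
  -- supNorm Q = supNorm P
  have hQP : ∀ x ∈ Metric.closedBall (0:X) 1,
      ‖y' x * L (fun _ => x)‖ ≤ ‖polyEval L x‖ := by
    intro x hx
    rw [norm_mul]
    have : ‖y' x‖ ≤ 1 := by
      calc ‖y' x‖ ≤ ‖y'‖ * ‖x‖ := y'.le_opNorm x
        _ ≤ 1 * 1 := by
            exact mul_le_mul (le_of_eq hy'n) ((hmem x).1 hx) (norm_nonneg x) zero_le_one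
        _ = 1 := mul_one 1
    exact mul_le_of_le_one_left (norm_nonneg _) this
  have hQbdd : BddAbove ((fun x => ‖y' x * L (fun _ => x)‖) '' Metric.closedBall (0:X) 1) := by
    refine ⟨supNorm (polyEval L), ?_⟩
    rintro r ⟨x, hx, rfl⟩
    exact le_trans (hQP x hx) (hPle x hx)
  have hQy : ‖y' y * L (fun _ => y)‖ = supNorm (polyEval L) := by
    rw [hy'y, one_mul]
    exact hPy
  have hsupQ : supNorm (fun x => y' x * L (fun _ => x)) = supNorm (polyEval L) := by
    apply le_antisymm
    · apply csSup_le
      · exact ⟨_, Set.mem_image_of_mem _ (Metric.mem_closedBall_self zero_le_one)⟩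
      · rintro r ⟨x, hx, rfl⟩
        exact le_trans (hQP x hx) (hPle x hx)
    · rw [← hQy]
      exact le_csSup hQbdd (Set.mem_image_of_mem _ hymem)
  constructor
  · intro xs hxsb htend
    rw [hsupQ] at htend
    have hsq : Tendsto (fun n => ‖polyEval L (xs n)‖) atTop (nhds (supNorm (polyEval L))) := by
      refine tendsto_of_tendsto_of_tendsto_of_le_of_le htend tendsto_const_nhds
        (fun n => hQP (xs n) (hxsb n)) (fun n => hPle (xs n) (hxsb n))
    exact hatt xs hxsb hsq
  · refine ⟨(y'.smulRight L).uncurryLeft, ?_⟩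
    funext x
    show (y'.smulRight L) x (Fin.tail fun _ => x) = _
    rfl
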